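/- For every r ∈ ℕ there exists a constant C > 0, depending only on r, such that for all lifts f and g of orientation-preserving C^∞ circle diffeomorphisms, ‖f ∘ g − g‖_r ≤ C · ‖f − id‖_r · |g|_r^r. -/

import Mathlib

noncomputable section
open MeasureTheory Filter Topology

/-- A lift of an orientation-preserving `C^∞` circle diffeomorphism: a `C^∞` map
`f : ℝ → ℝ` with `f (x+1) = f x + 1` and everywhere positive derivative. -/
def IsCircleDiffeoLift (f : ℝ → ℝ) : Prop :=
  ContDiff ℝ (⊤ : ℕ∞) f ∧ (∀ x : ℝ, f (x + 1) = f x + 1) ∧ ∀ x : ℝ, 0 < deriv f x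

/-- The `C^r` norm `‖φ‖_r = max_{0 ≤ i ≤ r} sup_x |φ^{(i)}(x)|`. -/
def CrNorm (r : ℕ) (φ : ℝ → ℝ) : ℝ :=
  (Finset.range (r + 1)).sup' (Finset.nonempty_range_iff.mpr r.succ_ne_zero)
    fun i => ⨆ x : ℝ, |iteratedDeriv i φ x|

/-- `d_r(f, g) = max {‖f - g‖_r, ‖f⁻¹ - g⁻¹‖_r}`. -/
def liftDist (r : ℕ) (f g : ℝ → ℝ) : ℝ :=
  max (CrNorm r (fun x => f x - g x))
    (CrNorm r (fun x => Function.invFun f x - Function.invFun g x))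

/-- `|f|_r = max {‖f - id‖_r, ‖f⁻¹ - id‖_r, 1}`. -/
def liftNorm (r : ℕ) (f : ℝ → ℝ) : ℝ :=
  max (max (CrNorm r (fun x => f x - x)) (CrNorm r (fun x => Function.invFun f x - x))) 1

/-- The lift `x ↦ x + a` of the rotation by `a`. -/
def RotLift (a : ℝ) : ℝ → ℝ := fun x => x + a

/-- The rotation number of the circle diffeomorphism induced by the lift `f` equals `a`
(mod 1): the translation number `lim (fⁿ(0) - 0)/n` equals `a + k` for some integer `k`. -/
def HasRotationNumber (f : ℝ → ℝ) (a : ℝ) : Prop :=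
  ∃ k : ℤ, Tendsto (fun n : ℕ => f^[n] 0 / (n : ℝ)) atTop (nhds (a + k))

/-- The lift of the `i`-th iterate (`i ∈ ℤ`) of the circle diffeomorphism induced by `f`. -/
def zpowLift (f : ℝ → ℝ) : ℤ → ℝ → ℝ := fun i =>
  if 0 ≤ i then f^[i.toNat] else (Function.invFun f)^[(-i).toNat]

/-- The ratio set of a circle diffeomorphism, described through the family `Fz i` of its
iterates (`i ∈ ℤ`) and the family `D i` of the derivatives of its iterates: `t ≥ 0` lies in
the ratio set iff for every Borel `A` of positive Haar measure and every `ε > 0` there are a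
Borel `B ⊆ A` of positive measure and `i ∈ ℤ` with `Fz i '' B ⊆ A` and `|D i x - t| < ε`
on `B`. -/
def ratioSet (Fz : ℤ → UnitAddCircle → UnitAddCircle) (D : ℤ → UnitAddCircle → ℝ) : Set ℝ :=
  {t : ℝ | 0 ≤ t ∧ ∀ A : Set UnitAddCircle, MeasurableSet A → 0 < volume A →
    ∀ ε : ℝ, 0 < ε → ∃ B : Set UnitAddCircle, MeasurableSet B ∧ B ⊆ A ∧ 0 < volume B ∧
      ∃ i : ℤ, Fz i '' B ⊆ A ∧ ∀ x ∈ B, |D i x - t| < ε}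

/-- A lift of an orientation-preserving `C¹` circle diffeomorphism. -/
def IsC1CircleLift (f : ℝ → ℝ) : Prop :=
  ContDiff ℝ 1 f ∧ (∀ x : ℝ, f (x + 1) = f x + 1) ∧ ∀ x : ℝ, 0 < deriv f x

/-- Auxiliary: iterated derivatives of a 1-periodic function are 1-periodic. -/
lemma my_periodic_iteratedDeriv {φ : ℝ → ℝ} (h : Function.Periodic φ 1) (n : ℕ) :
    Function.Periodic (iteratedDeriv n φ) 1 := by
  intro x
  have : (fun z => φ (z + 1)) = φ := funext h
  calc iteratedDeriv n φ (x + 1) = iteratedDeriv n (fun z => φ (z + 1)) x := by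
        rw [iteratedDeriv_comp_add_const]
    _ = iteratedDeriv n φ x := by rw [this]

/-- Auxiliary: a continuous 1-periodic function has bounded iterated derivatives'
absolute values. -/
lemma my_bddAbove {φ : ℝ → ℝ} (h : Function.Periodic φ 1) (hc : Continuous φ) :
    BddAbove (Set.range fun x => |φ x|) := by
  have : Function.Periodic (fun x => |φ x|) 1 := fun x => by simp [h x]
  exact (this.compact_of_continuous one_ne_zero hc.abs).bddAbove

lemma my_iteratedDeriv_const (n : ℕ) (hn : n ≠ 0) (c x : ℝ) :
    iteratedDeriv n (fun _ : ℝ => c) x = 0 := by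
  rw [iteratedDeriv_eq_iteratedFDeriv, iteratedFDeriv_const_of_ne hn]
  simp

lemma my_iteratedDeriv_id (n : ℕ) (hn : 2 ≤ n) (x : ℝ) :
    iteratedDeriv n (fun y : ℝ => y) x = 0 := by
  obtain ⟨m, rfl⟩ : ∃ m, n = m + 1 := ⟨n - 1, by omega⟩
  have h1 : deriv (fun y : ℝ => y) = fun _ => (1 : ℝ) := by
    funext y; exact deriv_id y
  rw [iteratedDeriv_succ', h1, my_iteratedDeriv_const m (by omega) 1 x]

lemma my_iteratedDeriv_add_id (ψ : ℝ → ℝ) (hψ : ContDiff ℝ (⊤ : ℕ∞) ψ) (n : ℕ) (x : ℝ) :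
    iteratedDeriv n (fun y => ψ y + y) x
      = iteratedDeriv n ψ x + iteratedDeriv n (fun y : ℝ => y) x := by
  have h1 : (fun y => ψ y + y) = ψ + (fun y : ℝ => y) := rfl
  rw [h1, ← iteratedDerivWithin_univ, ← iteratedDerivWithin_univ, ← iteratedDerivWithin_univ]
  exact iteratedDerivWithin_add (Set.mem_univ x) uniqueDiffOn_univ
    ((hψ.of_le (by exact_mod_cast le_top) : ContDiff ℝ n ψ).contDiffWithinAt)
    ((contDiff_id.of_le le_top : ContDiff ℝ n (fun y : ℝ => y)).contDiffWithinAt)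

theorem stmt_10 (r : ℕ) :
    ∃ C : ℝ, 0 < C ∧ ∀ f g : ℝ → ℝ, IsCircleDiffeoLift f → IsCircleDiffeoLift g →
      CrNorm r (fun x => f (g x) - g x) ≤
        C * CrNorm r (fun x => f x - x) * liftNorm r g ^ r := by
  refine ⟨(r.factorial : ℝ) * 2 ^ r, by positivity, ?_⟩
  intro f g hf hg
  obtain ⟨hfs, hfp, -⟩ := hf
  obtain ⟨hgs, hgp, -⟩ := hg
  set φ : ℝ → ℝ := fun x => f x - x with hφdef
  set ψ : ℝ → ℝ := fun x => g x - x with hψdef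
  have hφ : ContDiff ℝ (⊤ : ℕ∞) φ := hfs.sub contDiff_id
  have hψ : ContDiff ℝ (⊤ : ℕ∞) ψ := hgs.sub contDiff_id
  have hφper : Function.Periodic φ 1 := fun x => by
    show f (x + 1) - (x + 1) = f x - x; rw [hfp x]; ring
  have hψper : Function.Periodic ψ 1 := fun x => by
    show g (x + 1) - (x + 1) = g x - x; rw [hgp x]; ring
  set Cφ : ℝ := CrNorm r φ with hCφ
  set L : ℝ := liftNorm r g with hL
  have hL1 : 1 ≤ L := le_max_right _ _
  have hψL : CrNorm r ψ ≤ L := le_trans (le_max_left _ _) (le_max_left _ _)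
  set D : ℝ := 2 * L with hD
  have hD1 : 1 ≤ D := by nlinarith
  -- bound on iterated derivatives of φ at any point, any order ≤ r
  have hφbd : ∀ i, i ≤ r → ∀ y : ℝ, |iteratedDeriv i φ y| ≤ Cφ := by
    intro i hi y
    have hb := my_bddAbove (my_periodic_iteratedDeriv hφper i)
      (hφ.continuous_iteratedDeriv i (by exact_mod_cast le_top))
    refine le_trans (le_ciSup hb y) ?_
    exact Finset.le_sup' (f := fun i => ⨆ x : ℝ, |iteratedDeriv i φ x|)
      (Finset.mem_range.mpr (by omega))
  have hCφ0 : 0 ≤ Cφ := le_trans (abs_nonneg _) (hφbd 0 (by omega) 0)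
  have hψbd : ∀ i, i ≤ r → ∀ y : ℝ, |iteratedDeriv i ψ y| ≤ L := by
    intro i hi y
    have hb := my_bddAbove (my_periodic_iteratedDeriv hψper i)
      (hψ.continuous_iteratedDeriv i (by exact_mod_cast le_top))
    refine le_trans (le_trans (le_ciSup hb y) ?_) hψL
    exact Finset.le_sup' (f := fun i => ⨆ x : ℝ, |iteratedDeriv i ψ x|)
      (Finset.mem_range.mpr (by omega))
  -- bound on iterated derivatives of g
  have hgbd : ∀ i, 1 ≤ i → i ≤ r → ∀ x : ℝ, |iteratedDeriv i g x| ≤ D ^ i := by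
    intro i h1 h2 x
    have hgeq : g = fun y => ψ y + y := by funext y; simp [hψdef]
    have key : iteratedDeriv i g x
        = iteratedDeriv i ψ x + iteratedDeriv i (fun y : ℝ => y) x := by
      rw [hgeq]; exact my_iteratedDeriv_add_id ψ hψ i x
    have hDi : D ≤ D ^ i := le_self_pow₀ hD1 (by omega)
    rcases eq_or_lt_of_le h1 with h | h
    · -- i = 1
      have hid : iteratedDeriv i (fun y : ℝ => y) x = 1 := by
        rw [← h]; simp [iteratedDeriv_one]
      rw [key, hid]
      calc |iteratedDeriv i ψ x + 1| ≤ |iteratedDeriv i ψ x| + 1 := by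
            simpa using abs_add_le (iteratedDeriv i ψ x) 1
        _ ≤ L + L := add_le_add (hψbd i h2 x) hL1
        _ = D := by rw [hD]; ring
        _ ≤ D ^ i := hDi
    · -- i ≥ 2
      rw [key, my_iteratedDeriv_id i h x, add_zero]
      calc |iteratedDeriv i ψ x| ≤ L := hψbd i h2 x
        _ ≤ D := by nlinarith
        _ ≤ D ^ i := hDi
  -- main estimate for each order n ≤ r and each point x
  have hmain : ∀ n, n ≤ r → ∀ x : ℝ,
      |iteratedDeriv n (fun x => f (g x) - g x) x|
        ≤ (r.factorial : ℝ) * 2 ^ r * Cφ * L ^ r := by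
    intro n hn x
    have hcomp : (fun x => f (g x) - g x) = φ ∘ g := by funext y; simp [hφdef]
    have hest : ‖iteratedFDeriv ℝ n (φ ∘ g) x‖ ≤ (n.factorial : ℝ) * Cφ * D ^ n := by
      apply norm_iteratedFDeriv_comp_le (N := ((⊤ : ℕ∞) : WithTop ℕ∞))
        hφ hgs (by exact_mod_cast le_top) x
      · intro i hi
        rw [norm_iteratedFDeriv_eq_norm_iteratedDeriv]
        simpa [Real.norm_eq_abs] using hφbd i (by omega) (g x)
      · intro i h1i hin
        rw [norm_iteratedFDeriv_eq_norm_iteratedDeriv]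
        simpa [Real.norm_eq_abs] using hgbd i h1i (by omega) x
    rw [hcomp, ← Real.norm_eq_abs, ← norm_iteratedFDeriv_eq_norm_iteratedDeriv]
    have hD0 : (0 : ℝ) ≤ D := by nlinarith
    calc ‖iteratedFDeriv ℝ n (φ ∘ g) x‖ ≤ (n.factorial : ℝ) * Cφ * D ^ n := hest
      _ ≤ (r.factorial : ℝ) * Cφ * D ^ r := by
          have h1 : (n.factorial : ℝ) ≤ (r.factorial : ℝ) := by
            exact_mod_cast Nat.factorial_le hn
          have h2 : D ^ n ≤ D ^ r := pow_le_pow_right₀ hD1 hn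
          exact mul_le_mul (mul_le_mul h1 le_rfl hCφ0 (by positivity)) h2
            (pow_nonneg hD0 n) (by positivity)
      _ = (r.factorial : ℝ) * 2 ^ r * Cφ * L ^ r := by
          rw [hD, mul_pow]; ring
  -- conclude
  rw [CrNorm]
  apply Finset.sup'_le
  intro i hi
  have hi' : i ≤ r := by simpa [Nat.lt_succ_iff] using Finset.mem_range.mp hi
  exact Real.iSup_le (fun x => hmain i hi' x) (by positivity)
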